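/- Let K be symmetric positive definite, d, m ∈ R^n, d ≠ m, and let μ* satisfy the basic equation (d-m)^T K^{-1}(m-μ*) = 1. Then (d-μ*)^T (K + (m-μ*)(m-μ*)^T)^{-1}(d-μ*) = (d-m)^T K^{-1}(d-m) + 1. In particular it is independent of the choice of μ* on the solution hyperplane. -/

import Mathlib

open Matrix

lemma vecMulVec_mulVec' {n : ℕ} (a x : Fin n → ℝ) :
    vecMulVec a a *ᵥ x = (a ⬝ᵥ x) • a := by
  funext i
  simp [mulVec, vecMulVec_apply, dotProduct, Finset.mul_sum, mul_comm, mul_left_comm, mul_assoc]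

lemma posSemidef_vecMulVec' {n : ℕ} (a : Fin n → ℝ) :
    (vecMulVec a a).PosSemidef := by
  constructor
  · ext i j
    simp [conjTranspose_apply, vecMulVec_apply, mul_comm]
  · have h := posSemidef_vecMulVec_self_star a
    simp only [star_trivial] at h
    exact h.2

theorem g_value_on_hyperplane (n : ℕ) (K : Matrix (Fin n) (Fin n) ℝ)
    (hK : K.PosDef) (d m : Fin n → ℝ) (hdm : d ≠ m) (μ : Fin n → ℝ)
    (hμ : (d - m) ⬝ᵥ (K⁻¹ *ᵥ (m - μ)) = 1) :
    (d - μ) ⬝ᵥ ((K + vecMulVec (m - μ) (m - μ))⁻¹ *ᵥ (d - μ)) =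
      (d - m) ⬝ᵥ (K⁻¹ *ᵥ (d - m)) + 1 := by
  set a : Fin n → ℝ := m - μ with ha
  set u : Fin n → ℝ := d - m with hu
  set R : Matrix (Fin n) (Fin n) ℝ := K + vecMulVec a a with hR
  have hRpd : R.PosDef := hK.add_posSemidef (posSemidef_vecMulVec' a)
  -- key: a ⬝ᵥ (K⁻¹ *ᵥ u) = 1
  have hKinvH : (K⁻¹).IsHermitian := hK.isHermitian.inv
  have hT : K⁻¹ᵀ = K⁻¹ := by
    rw [← conjTranspose_eq_transpose_of_trivial, hKinvH.eq]
  have hsym : a ⬝ᵥ (K⁻¹ *ᵥ u) = u ⬝ᵥ (K⁻¹ *ᵥ a) := by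
    rw [dotProduct_mulVec, ← vecMul_transpose, hT, dotProduct_comm]
  have key : a ⬝ᵥ (K⁻¹ *ᵥ u) = 1 := by rw [hsym]; exact hμ
  -- R *ᵥ (K⁻¹ *ᵥ u) = d - μ
  have hKK : K * K⁻¹ = 1 := mul_nonsing_inv K ((Matrix.isUnit_iff_isUnit_det K).1 hK.isUnit)
  have hRx : R *ᵥ (K⁻¹ *ᵥ u) = d - μ := by
    rw [hR, add_mulVec, mulVec_mulVec, hKK, one_mulVec, vecMulVec_mulVec', key, one_smul]
    funext i; simp [hu, ha]
  have hdμ : d - μ = u + a := by funext i; simp [hu, ha]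
  have hinv : R⁻¹ *ᵥ (d - μ) = K⁻¹ *ᵥ u := by
    rw [← hRx, mulVec_mulVec, nonsing_inv_mul R ((Matrix.isUnit_iff_isUnit_det R).1 hRpd.isUnit), one_mulVec]
  rw [hinv, hdμ, add_dotProduct, key]
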